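/- Let D be continuously distributed with density f_D > 0 and let (D, X) have joint density f_{D,X}. Let H_t(d) = F_D(d) + t(G_D(d) − F_D(d)) and D^t = H_t^{-1}(F_D(D)). If C is the copula of (D^t, X), so that C(H_t(d), F_X(x)) = F_{D^t,X}(d, x), then ∂_t C(H_t(d), F_X(x))|_{t=0} = F_{X|D}(x|d)·(G_D(d) − F_D(d)). -/

import Mathlib

open Filter Topology Set MeasureTheory ProbabilityTheory

/-- derivative of the copula of `(D^t, X)` under the marginal
perturbation `H_t = F_D + t(G_D − F_D)`, `D^t = H_t⁻¹(F_D(D))`. If `C` is the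
copula of `(D^t, X)` with `C(H_t(d), F_X(x)) = F_{D^t,X}(d, x)`, then
`∂_t C(H_t(d), F_X(x))|_{t=0} = F_{X|D}(x|d)·(G_D(d) − F_D(d))`. -/
theorem copula_derivative_marginal_perturbation
    {Ω : Type*} [MeasureSpace Ω] [IsProbabilityMeasure (ℙ : Measure Ω)]
    (D X : Ω → ℝ) (hD : Measurable D) (hX : Measurable X)
    (F G f FX : ℝ → ℝ) (FXgD : ℝ → ℝ → ℝ)  -- F_D, G_D, f_D, F_X, F_{X|D}(x|d)
    (hF : ∀ d, F d = (ℙ {ω | D ω ≤ d}).toReal)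
    (hFX : ∀ x, FX x = (ℙ {ω | X ω ≤ x}).toReal)
    (hGcdf : Monotone G)
    (hFcont : Continuous F) (hFmono : StrictMono F)
    (hf : ∀ d, HasDerivAt F (f d) d) (hfpos : ∀ d, 0 < f d)
    -- the conditional CDF of X given D, via ∂_d F_{D,X}(d,x) = F_{X|D}(x|d) f_D(d)
    (hFXgD : ∀ d x, HasDerivAt (fun a => (ℙ {ω | D ω ≤ a ∧ X ω ≤ x}).toReal)
        (FXgD x d * f d) d)
    (H : ℝ → ℝ → ℝ)
    (hH : ∀ t d, H t d = F d + t * (G d - F d))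
    (Hinv : ℝ → ℝ → ℝ)
    (hHinv : ∀ t u, Hinv t u = sInf {a : ℝ | u ≤ H t a})
    -- Sklar: C is the copula of (D^t, X)
    (C : ℝ → ℝ → ℝ)
    (hC : ∀ t ∈ Icc (0:ℝ) 1, ∀ d x,
      C (H t d) (FX x) = (ℙ {ω | Hinv t (F (D ω)) ≤ d ∧ X ω ≤ x}).toReal)
    (d x : ℝ) :
    HasDerivWithinAt (fun t => C (H t d) (FX x))
      (FXgD x d * (G d - F d)) (Ici (0:ℝ)) 0 := by
  set c : ℝ := G d - F d with hc
  set K : ℝ → ℝ := fun a => (ℙ {ω | D ω ≤ a ∧ X ω ≤ x}).toReal with hK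
  -- Hinv 0 is a genuine left inverse of F
  have hq : ∀ w : ℝ, Hinv 0 (F w) = w := by
    intro w
    rw [hHinv]
    have hset : {a : ℝ | F w ≤ H 0 a} = Ici w := by
      ext a
      simp [hH, hFmono.le_iff_le]
    rw [hset, csInf_Ici]
  -- the value of C at points F a
  have hC0 : ∀ a : ℝ, C (F a) (FX x) = K a := by
    intro a
    have h := hC 0 (by constructor <;> norm_num) a x
    have hH0 : H 0 a = F a := by rw [hH]; ring
    have hsets : {ω | Hinv 0 (F (D ω)) ≤ a ∧ X ω ≤ x} = {ω | D ω ≤ a ∧ X ω ≤ x} := by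
      ext ω; simp [hq]
    rw [hH0, hsets] at h
    exact h
  -- neighbourhood of F d inside the range of F
  have hlt1 : F (d - 1) < F d := hFmono (by linarith)
  have hlt2 : F d < F (d + 1) := hFmono (by linarith)
  have hIVT : ∀ y ∈ Ioo (F (d - 1)) (F (d + 1)), ∃ w, F w = y := by
    intro y hy
    obtain ⟨w, -, hw⟩ := intermediate_value_Ioo (by linarith : d - 1 ≤ d + 1)
      hFcont.continuousOn hy
    exact ⟨w, hw⟩
  have hFq : ∀ y ∈ Ioo (F (d - 1)) (F (d + 1)), F (Hinv 0 y) = y := by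
    intro y hy
    obtain ⟨w, hw⟩ := hIVT y hy
    rw [← hw, hq]
  -- continuity of Hinv 0 at F d
  have hqcont : ContinuousAt (Hinv 0) (F d) := by
    rw [ContinuousAt, hq d, Metric.tendsto_nhds]
    intro ε hε
    set ε' : ℝ := min ε 1 with hε'
    have hε'pos : 0 < ε' := lt_min hε one_pos
    have h1 : F (d - ε') < F d := hFmono (by linarith)
    have h2 : F d < F (d + ε') := hFmono (by linarith)
    filter_upwards [Ioo_mem_nhds h1 h2] with y hy
    obtain ⟨w, hw⟩ := hIVT y ⟨lt_of_le_of_lt (hFmono.le_iff_le.mpr (by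
      have : ε' ≤ 1 := min_le_right _ _
      linarith)) hy.1, lt_of_lt_of_le hy.2 (hFmono.le_iff_le.mpr (by
      have : ε' ≤ 1 := min_le_right _ _
      linarith))⟩
    have hw1 : d - ε' < w := by
      by_contra hcon
      push_neg at hcon
      have := hFmono.le_iff_le.mpr hcon
      rw [hw] at this
      exact absurd hy.1 (not_lt.mpr this)
    have hw2 : w < d + ε' := by
      by_contra hcon
      push_neg at hcon
      have := hFmono.le_iff_le.mpr hcon
      rw [hw] at this
      exact absurd hy.2 (not_lt.mpr this)
    rw [← hw, hq]
    rw [Real.dist_eq]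
    have : |w - d| < ε' := abs_sub_lt_iff.mpr ⟨by linarith, by linarith⟩
    exact lt_of_lt_of_le this (min_le_left _ _)
  -- derivative of the inverse
  have hqderiv : HasDerivAt (Hinv 0) (f d)⁻¹ (F d) := by
    apply HasDerivAt.of_local_left_inverse hqcont
    · rw [hq d]; exact hf d
    · exact (hfpos d).ne'
    · filter_upwards [Ioo_mem_nhds hlt1 hlt2] with y hy using hFq y hy
  -- derivative of K at Hinv 0 (F d)
  have hKd : HasDerivAt K (FXgD x d * f d) (Hinv 0 (F d)) := by
    rw [hq d]; exact hFXgD d x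
  -- derivative of t ↦ F d + t * c
  have hlin : HasDerivAt (fun t : ℝ => F d + t * c) c 0 := by
    simpa using ((hasDerivAt_id (0 : ℝ)).mul_const c).const_add (F d)
  -- composite derivative
  have hKq : HasDerivAt (fun y => K (Hinv 0 y)) (FXgD x d * f d * (f d)⁻¹) (F d) :=
    HasDerivAt.comp (F d) hKd hqderiv
  have hKq0 : HasDerivAt (fun y => K (Hinv 0 y)) (FXgD x d * f d * (f d)⁻¹) (F d + 0 * c) := by
    simpa using hKq
  have hcomp : HasDerivAt (fun t : ℝ => K (Hinv 0 (F d + t * c)))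
      (FXgD x d * f d * (f d)⁻¹ * c) 0 := by
    have := HasDerivAt.comp 0 hKq0 hlin; exact this
  have hderiv_eq : FXgD x d * f d * (f d)⁻¹ * c = FXgD x d * c := by
    rw [mul_assoc (FXgD x d), mul_inv_cancel₀ (hfpos d).ne', mul_one]
  rw [hderiv_eq] at hcomp
  -- choose δ so that H t d stays in the good interval for t ∈ [0, δ)
  set ε : ℝ := min (F d - F (d - 1)) (F (d + 1) - F d) with hεdef
  have hεpos : 0 < ε := lt_min (by linarith) (by linarith)
  set δ : ℝ := min 1 (ε / (|c| + 1)) with hδdef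
  have habs : (0:ℝ) < |c| + 1 := by positivity
  have hδpos : 0 < δ := lt_min one_pos (div_pos hεpos habs)
  have hmem : ∀ t ∈ Ico (0:ℝ) δ, F d + t * c ∈ Ioo (F (d - 1)) (F (d + 1)) := by
    intro t ht
    have ht0 : 0 ≤ t := ht.1
    have htδ : t < ε / (|c| + 1) := lt_of_lt_of_le ht.2 (min_le_right _ _)
    have : |t * c| < ε := by
      rw [abs_mul, abs_of_nonneg ht0]
      calc t * |c| ≤ t * (|c| + 1) := by nlinarith [abs_nonneg c]
        _ < ε := by
          rw [← div_mul_cancel₀ ε habs.ne']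
          exact mul_lt_mul_of_pos_right htδ habs
    have h1 : -(ε) < t * c := by
      have := (abs_lt.mp this).1; linarith
    have h2 : t * c < ε := (abs_lt.mp this).2
    constructor
    · linarith [min_le_left (F d - F (d - 1)) (F (d + 1) - F d)]
    · linarith [min_le_right (F d - F (d - 1)) (F (d + 1) - F d)]
  -- the two functions agree on [0, δ)
  have heq : ∀ t ∈ Ico (0:ℝ) δ, C (H t d) (FX x) = K (Hinv 0 (F d + t * c)) := by
    intro t ht
    have hy := hmem t ht
    obtain ⟨w, hw⟩ := hIVT _ hy
    have hHt : H t d = F w := by rw [hH, hw]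
    rw [hHt, hC0 w, ← hw, hq]
  have hev : (fun t => C (H t d) (FX x)) =ᶠ[𝓝[Ici (0:ℝ)] 0]
      (fun t : ℝ => K (Hinv 0 (F d + t * c))) := by
    filter_upwards [Ico_mem_nhdsGE hδpos] with t ht
    exact heq t ht
  have h0 : C (H 0 d) (FX x) = K (Hinv 0 (F d + 0 * c)) :=
    heq 0 (left_mem_Ico.mpr hδpos)
  exact hcomp.hasDerivWithinAt.congr_of_eventuallyEq hev h0
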